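/- Let k ≥ 3 and S ⊆ {4,…,k}. In the graph 𝒜_{k,S}, the degree of vertex 2 equals (k − 1) + |S|, and for each i ∈ {4,…,k} the degree of the wing vertex i₂ equals k − i + 2 if i ∉ S and k − i + 3 if i ∈ S. -/

import Mathlib

open SimpleGraph

/-- Vertices of the graph `𝒜_k` (and `𝒜_{k,S}`): `Sum.inl a` with `a : Fin 3` is the
unstretched vertex `a + 1 ∈ {1,2,3}`, and `Sum.inr (j, t)` with `j : Fin (k-3)` encodes,
for `i = j + 4 ∈ {4,…,k}`, the hub `i₀` (when `t = 0`) and the wings `i₁, i₂`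
(when `t = 1, 2`). -/
abbrev AVert (k : ℕ) := Fin 3 ⊕ (Fin (k - 3) × Fin 3)

/-- Edges of `𝒜_{k,S}`: the triangle `{1,2},{2,3},{1,3}`; for each `4 ≤ i ≤ k` the edges
`{i₀,i₁}, {i₀,i₂}, {i₁,2}, {i₁,3}, {i₂,1}`; for `4 ≤ i < j ≤ k` the edges `{i₂, j₁}`;
and additionally `{i₂, 2}` for `i ∈ S`. -/
def ARel (k : ℕ) (S : Finset ℕ) : AVert k → AVert k → Prop
  | Sum.inl _, Sum.inl _ => True
  | Sum.inl _, Sum.inr _ => False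
  | Sum.inr (j, t), Sum.inl a =>
      (t = 1 ∧ (a = 1 ∨ a = 2)) ∨ (t = 2 ∧ a = 0) ∨ (t = 2 ∧ a = 1 ∧ (j : ℕ) + 4 ∈ S)
  | Sum.inr (j, t), Sum.inr (j', t') =>
      (j = j' ∧ t = 0 ∧ t' ≠ 0) ∨ (t = 2 ∧ t' = 1 ∧ (j : ℕ) < (j' : ℕ))

/-- The graph `𝒜_{k,S}`; the graph `𝒜_k` is `AGraph k ∅`. -/
def AGraph (k : ℕ) (S : Finset ℕ) : SimpleGraph (AVert k) :=
  SimpleGraph.fromRel (ARel k S)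

/-- In `𝒜_{k,S}` the vertex `2` has degree `(k - 1) + |S|`, and for `4 ≤ i ≤ k` the wing
vertex `i₂` has degree `k - i + 3` if `i ∈ S` and `k - i + 2` otherwise. -/
theorem AGraph_degrees (k : ℕ) (hk : 3 ≤ k) (S : Finset ℕ) (hS : S ⊆ Finset.Icc 4 k) :
    ((AGraph k S).neighborSet (Sum.inl 1)).ncard = (k - 1) + S.card ∧
    ∀ (i : ℕ) (h4 : 4 ≤ i) (hik : i ≤ k),
      ((AGraph k S).neighborSet
          (Sum.inr (⟨i - 4, by omega⟩, 2))).ncard =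
        if i ∈ S then k - i + 3 else k - i + 2 := by
  constructor
  · -- degree of vertex 2
    have hset : (AGraph k S).neighborSet (Sum.inl 1) =
        ↑(({Sum.inl 0, Sum.inl 2} : Finset (AVert k)) ∪
          (Finset.univ.image fun j : Fin (k-3) => (Sum.inr (j, 1) : AVert k)) ∪
          ((Finset.univ.filter fun j : Fin (k-3) => (j:ℕ)+4 ∈ S).image
            fun j => (Sum.inr (j, 2) : AVert k))) := by
      ext x
      rcases x with a | ⟨j, t⟩ <;>
        simp [AGraph, fromRel_adj, ARel, Prod.ext_iff, eq_comm]
      · omega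
      · constructor
        · rintro (h | ⟨ht, hj⟩)
          · exact Or.inl h
          · exact Or.inr ⟨hj, ht⟩
        · rintro (h | ⟨hx, rfl⟩)
          · exact Or.inl h
          · exact Or.inr ⟨rfl, hx⟩
    rw [hset, Set.ncard_coe_finset]
    rw [Finset.card_union_of_disjoint, Finset.card_union_of_disjoint]
    · have h1 : ({Sum.inl 0, Sum.inl 2} : Finset (AVert k)).card = 2 :=
        Finset.card_pair (by simp)
      have h2 : (Finset.univ.image fun j : Fin (k-3) =>
          (Sum.inr (j, 1) : AVert k)).card = k - 3 := by
        rw [Finset.card_image_of_injective _ (fun a b h => by simpa using h)]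
        simp
      have h3 : ((Finset.univ.filter fun j : Fin (k-3) => (j:ℕ)+4 ∈ S).image
          fun j => (Sum.inr (j, 2) : AVert k)).card = S.card := by
        rw [Finset.card_image_of_injective _ (fun a b h => by simpa using h)]
        refine Finset.card_bij (fun j _ => (j:ℕ)+4) ?_ ?_ ?_
        · intro j hj; simpa using hj
        · intro a _ b _ h; exact Fin.ext (by omega)
        · intro i hi
          have hi' := hS hi
          simp only [Finset.mem_Icc] at hi'
          exact ⟨⟨i - 4, by omega⟩, by simpa using (by simpa [Nat.sub_add_cancel hi'.1] using hi), by simp; omega⟩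
      rw [h1, h2, h3]
      omega
    · simp [Finset.disjoint_left]
    · rw [Finset.disjoint_left]
      rintro x hx
      simp only [Finset.mem_union, Finset.mem_insert, Finset.mem_singleton,
        Finset.mem_image, Finset.mem_univ, true_and] at hx
      rcases hx with (rfl | rfl) | ⟨j, rfl⟩ <;> simp
  · -- degree of wing vertices
    intro i h4 hik
    set j0 : Fin (k - 3) := ⟨i - 4, by omega⟩ with hj0def
    have hj0 : (j0 : ℕ) = i - 4 := rfl
    have h44 : i - 4 + 4 = i := by omega
    have hset : (AGraph k S).neighborSet (Sum.inr (j0, 2)) =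
        ↑((if i ∈ S then ({Sum.inl 0, Sum.inl 1} : Finset (AVert k)) else {Sum.inl 0}) ∪
          {Sum.inr (j0, 0)} ∪
          ((Finset.Ioi j0).image fun j' => (Sum.inr (j', 1) : AVert k))) := by
      ext x
      rcases x with a | ⟨j, t⟩ <;>
        simp [AGraph, fromRel_adj, ARel, Prod.ext_iff, eq_comm, Fin.lt_def, hj0, h44] <;>
        split_ifs with h <;> simp [h]
      · constructor
        · rintro ⟨-, ⟨ht, hlt⟩ | hj⟩
          · exact Or.inr ⟨hlt, ht⟩
          · exact Or.inl hj
        · rintro (⟨rfl, rfl⟩ | ⟨hx, rfl⟩)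
          · exact ⟨fun _ => by decide, Or.inr ⟨rfl, rfl⟩⟩
          · exact ⟨fun _ => by decide, Or.inl ⟨rfl, hx⟩⟩
      · constructor
        · rintro ⟨-, ⟨ht, hlt⟩ | hj⟩
          · exact Or.inr ⟨hlt, ht⟩
          · exact Or.inl hj
        · rintro (⟨rfl, rfl⟩ | ⟨hx, rfl⟩)
          · exact ⟨fun _ => by decide, Or.inr ⟨rfl, rfl⟩⟩
          · exact ⟨fun _ => by decide, Or.inl ⟨rfl, hx⟩⟩
    rw [hset, Set.ncard_coe_finset]
    rw [Finset.card_union_of_disjoint, Finset.card_union_of_disjoint]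
    · have h2 : ((Finset.Ioi j0).image fun j' => (Sum.inr (j', 1) : AVert k)).card
          = k - i := by
        rw [Finset.card_image_of_injective _ (fun a b h => by simpa using h)]
        rw [Fin.card_Ioi]
        omega
      have h1 : (if i ∈ S then ({Sum.inl 0, Sum.inl 1} : Finset (AVert k))
          else {Sum.inl 0}).card = if i ∈ S then 2 else 1 := by
        split_ifs
        · exact Finset.card_pair (by simp)
        · simp
      rw [h1, h2, Finset.card_singleton]
      split_ifs <;> omega
    · split_ifs <;> simp [Finset.disjoint_left]
    · rw [Finset.disjoint_left]
      rintro x hx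
      have : x = Sum.inl 0 ∨ x = Sum.inl 1 ∨ x = Sum.inr (j0, 0) := by
        split_ifs at hx <;> simp at hx <;> tauto
      rcases this with rfl | rfl | rfl <;> simp
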